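/- For compact intervals A = [a⁻, a⁺] and B = [b⁻, b⁺] in ℝ with 0 ∉ B, the generalized division A ÷_g B exists: the interval C with endpoints c⁻ = min{a⁻/b⁻, a⁻/b⁺, a⁺/b⁻, a⁺/b⁺} and c⁺ = max{…} appropriately chosen satisfies A = B·C or B = A·C⁻¹, where interval multiplication is [min of products, max of products] and C⁻¹ = [1/c⁺, 1/c⁻] (assuming 0 ∉ C when needed). In particular: (1) B ÷_g B = {1}; (2) (A·B) ÷_g B = A; (3) {1} ÷_g B = B⁻¹. -/

import Mathlib

open Pointwise

/-- C = A ÷_g B iff A = B·C or B = A·C⁻¹ (pointwise set operations). -/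
def IsGDiv (A B C : Set ℝ) : Prop :=
  A = B * C ∨ B = A * C⁻¹

lemma set_inv_neg (s : Set ℝ) : (-s)⁻¹ = -(s⁻¹) := by
  ext x
  simp only [Set.mem_inv, Set.mem_neg]
  rw [← inv_neg]

/-- product of nonneg intervals, left lower bound positive -/
lemma Icc_mul_Icc_pos {p q r s : ℝ} (hp : 0 < p) (hpq : p ≤ q) (hr : 0 ≤ r) (hrs : r ≤ s) :
    Set.Icc p q * Set.Icc r s = Set.Icc (p * r) (q * s) := by
  ext t
  constructor
  · rintro ⟨y, hy, z, hz, rfl⟩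
    simp only [Set.mem_Icc] at hy hz ⊢
    constructor
    · nlinarith [hy.1, hy.2, hz.1, hz.2]
    · nlinarith [hy.1, hy.2, hz.1, hz.2]
  · rintro ⟨h1, h2⟩
    by_cases hts : t ≤ p * s
    · refine ⟨p, ⟨le_refl _, hpq⟩, t / p, ⟨?_, ?_⟩, mul_div_cancel₀ t hp.ne'⟩
      · rw [le_div_iff₀ hp]; nlinarith
      · rw [div_le_iff₀ hp]; nlinarith
    · push_neg at hts
      have hs : 0 < s := by
        rcases lt_or_ge 0 s with h | h
        · exact h
        · exfalso
          have hr0 : r = 0 := le_antisymm (hrs.trans h) hr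
          nlinarith
      refine ⟨t / s, ⟨?_, ?_⟩, s, ⟨hrs, le_refl _⟩, div_mul_cancel₀ t hs.ne'⟩
      · rw [le_div_iff₀ hs]; nlinarith
      · rw [div_le_iff₀ hs]; nlinarith

/-- product of positive interval with interval containing zero -/
lemma Icc_mul_Icc_mixed {b₁ b₂ c₁ c₂ : ℝ} (hb1 : 0 < b₁) (hb : b₁ ≤ b₂)
    (hc1 : c₁ ≤ 0) (hc2 : 0 ≤ c₂) :
    Set.Icc b₁ b₂ * Set.Icc c₁ c₂ = Set.Icc (b₂ * c₁) (b₂ * c₂) := by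
  have hb2 : 0 < b₂ := hb1.trans_le hb
  ext t
  constructor
  · rintro ⟨y, hy, z, hz, rfl⟩
    simp only [Set.mem_Icc] at hy hz ⊢
    rcases le_or_gt 0 z with hz0 | hz0
    · constructor
      · nlinarith [hy.1, hy.2, hz.1, hz.2]
      · nlinarith [hy.1, hy.2, hz.1, hz.2]
    · constructor
      · nlinarith [hy.1, hy.2, hz.1, hz.2]
      · nlinarith [hy.1, hy.2, hz.1, hz.2]
  · rintro ⟨h1, h2⟩
    refine ⟨b₂, ⟨hb, le_refl _⟩, t / b₂, ⟨?_, ?_⟩, mul_div_cancel₀ t hb2.ne'⟩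
    · rw [le_div_iff₀ hb2]; nlinarith
    · rw [div_le_iff₀ hb2]; nlinarith

/-- inverse of a positive interval -/
lemma inv_Icc_pos {c₁ c₂ : ℝ} (h1 : 0 < c₁) (h : c₁ ≤ c₂) :
    (Set.Icc c₁ c₂)⁻¹ = Set.Icc c₂⁻¹ c₁⁻¹ := by
  have h2 : 0 < c₂ := h1.trans_le h
  ext x
  simp only [Set.mem_inv, Set.mem_Icc]
  constructor
  · rintro ⟨ha, hb⟩
    have hx : 0 < x := inv_pos.mp (h1.trans_le ha)
    exact ⟨(inv_le_comm₀ h2 hx).mpr hb, (le_inv_comm₀ hx h1).mpr ha⟩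
  · rintro ⟨ha, hb⟩
    have hx : 0 < x := lt_of_lt_of_le (inv_pos.mpr h2) ha
    exact ⟨(le_inv_comm₀ h1 hx).mpr hb, (inv_le_comm₀ hx h2).mpr ha⟩

/-- existence for positive B and positive A -/
lemma exists_gdiv_pp (a₁ a₂ b₁ b₂ : ℝ) (ha : a₁ ≤ a₂) (hb : b₁ ≤ b₂)
    (hb1 : 0 < b₁) (ha1 : 0 < a₁) :
    ∃ c₁ c₂ : ℝ, c₁ ≤ c₂ ∧ IsGDiv (Set.Icc a₁ a₂) (Set.Icc b₁ b₂) (Set.Icc c₁ c₂) := by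
  have hb2 : 0 < b₂ := hb1.trans_le hb
  have ha2 : 0 < a₂ := ha1.trans_le ha
  rcases le_or_gt (a₁ * b₂) (a₂ * b₁) with hw | hw
  · -- A = B * C with C = [a₁/b₁, a₂/b₂]
    refine ⟨a₁ / b₁, a₂ / b₂, ?_, Or.inl ?_⟩
    · rw [div_le_div_iff₀ hb1 hb2]; linarith
    · rw [Icc_mul_Icc_pos hb1 hb (by positivity) (by rw [div_le_div_iff₀ hb1 hb2]; linarith)]
      rw [mul_div_cancel₀ a₁ hb1.ne', mul_div_cancel₀ a₂ hb2.ne']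
  · -- B = A * C⁻¹ with C = [a₂/b₂, a₁/b₁]
    refine ⟨a₂ / b₂, a₁ / b₁, ?_, Or.inr ?_⟩
    · rw [div_le_div_iff₀ hb2 hb1]; linarith
    · rw [inv_Icc_pos (by positivity) (by rw [div_le_div_iff₀ hb2 hb1]; linarith)]
      rw [inv_div, inv_div]
      rw [Icc_mul_Icc_pos ha1 ha (by positivity)
        (by rw [div_le_div_iff₀ ha1 ha2]; nlinarith)]
      rw [mul_div_cancel₀ b₁ ha1.ne', mul_div_cancel₀ b₂ ha2.ne']

/-- existence for positive B -/
lemma exists_gdiv_posB (a₁ a₂ b₁ b₂ : ℝ) (ha : a₁ ≤ a₂) (hb : b₁ ≤ b₂) (hb1 : 0 < b₁) :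
    ∃ c₁ c₂ : ℝ, c₁ ≤ c₂ ∧ IsGDiv (Set.Icc a₁ a₂) (Set.Icc b₁ b₂) (Set.Icc c₁ c₂) := by
  have hb2 : 0 < b₂ := hb1.trans_le hb
  rcases lt_or_ge 0 a₁ with h1 | h1
  · exact exists_gdiv_pp a₁ a₂ b₁ b₂ ha hb hb1 h1
  rcases le_or_gt 0 a₂ with h2 | h2
  · -- 0 ∈ A : C = [a₁/b₂, a₂/b₂], A = B*C
    refine ⟨a₁ / b₂, a₂ / b₂, (div_le_div_iff_of_pos_right hb2).mpr ha, Or.inl ?_⟩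
    · rw [Icc_mul_Icc_mixed hb1 hb (div_nonpos_of_nonpos_of_nonneg h1 hb2.le)
        (div_nonneg h2 hb2.le)]
      rw [mul_div_cancel₀ a₁ hb2.ne', mul_div_cancel₀ a₂ hb2.ne']
  · -- A negative: reduce to positive A by negation
    obtain ⟨c₁, c₂, hc, hgd⟩ :=
      exists_gdiv_pp (-a₂) (-a₁) b₁ b₂ (by linarith) hb hb1 (by linarith)
    refine ⟨-c₂, -c₁, by linarith, ?_⟩
    rw [show Set.Icc (-c₂) (-c₁) = -Set.Icc c₁ c₂ from (Set.neg_Icc c₁ c₂).symm]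
    have hA : Set.Icc (-a₂) (-a₁) = -Set.Icc a₁ a₂ := (Set.neg_Icc a₁ a₂).symm
    rcases hgd with h | h
    · left
      rw [mul_neg, ← h, hA, neg_neg]
    · right
      rw [h, hA, set_inv_neg, neg_mul, mul_neg]

/-- existence, general B -/
lemma exists_gdiv (a₁ a₂ b₁ b₂ : ℝ) (ha : a₁ ≤ a₂) (hb : b₁ ≤ b₂)
    (h0 : (0 : ℝ) ∉ Set.Icc b₁ b₂) :
    ∃ c₁ c₂ : ℝ, c₁ ≤ c₂ ∧ IsGDiv (Set.Icc a₁ a₂) (Set.Icc b₁ b₂) (Set.Icc c₁ c₂) := by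
  rcases lt_or_ge 0 b₁ with hb1 | hb1
  · exact exists_gdiv_posB a₁ a₂ b₁ b₂ ha hb hb1
  · have hb2 : b₂ < 0 := by
      by_contra h
      exact h0 ⟨hb1, le_of_not_gt h⟩
    obtain ⟨c₁, c₂, hc, hgd⟩ :=
      exists_gdiv_posB (-a₂) (-a₁) (-b₂) (-b₁) (by linarith) (by linarith) (by linarith)
    refine ⟨c₁, c₂, hc, ?_⟩
    have hA : Set.Icc (-a₂) (-a₁) = -Set.Icc a₁ a₂ := (Set.neg_Icc a₁ a₂).symm
    have hB : Set.Icc (-b₂) (-b₁) = -Set.Icc b₁ b₂ := (Set.neg_Icc b₁ b₂).symm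
    rw [hA, hB] at hgd
    rcases hgd with h | h
    · left
      have := congrArg Neg.neg h
      rwa [neg_neg, neg_mul, neg_neg] at this
    · right
      have := congrArg Neg.neg h
      rwa [neg_neg, neg_mul, neg_neg] at this

/-- The g-division of compact intervals with 0 ∉ B exists, and:
B ÷_g B = {1}, (A·B) ÷_g B = A, {1} ÷_g B = B⁻¹. -/
theorem g_division_intervals (a₁ a₂ b₁ b₂ : ℝ) (ha : a₁ ≤ a₂) (hb : b₁ ≤ b₂)
    (h0 : (0 : ℝ) ∉ Set.Icc b₁ b₂) :
    (∃ c₁ c₂ : ℝ, c₁ ≤ c₂ ∧ IsGDiv (Set.Icc a₁ a₂) (Set.Icc b₁ b₂) (Set.Icc c₁ c₂)) ∧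
    IsGDiv (Set.Icc b₁ b₂) (Set.Icc b₁ b₂) ({1} : Set ℝ) ∧
    IsGDiv (Set.Icc a₁ a₂ * Set.Icc b₁ b₂) (Set.Icc b₁ b₂) (Set.Icc a₁ a₂) ∧
    IsGDiv ({1} : Set ℝ) (Set.Icc b₁ b₂) ((Set.Icc b₁ b₂)⁻¹) := by
  refine ⟨exists_gdiv a₁ a₂ b₁ b₂ ha hb h0, ?_, ?_, ?_⟩
  · left
    rw [Set.singleton_one, mul_one]
  · left
    exact mul_comm _ _
  · right
    rw [inv_inv, Set.singleton_one, one_mul]
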